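/- Let F : ℂ^n → ℝ^n be given by F₁(z) = Im(z₁z₂⋯zₙ) and Fₖ(z) = |z₁|² − |zₖ|² for k = 2,…,n. Then for all i, j the Poisson bracket {Fᵢ, Fⱼ} with respect to the standard symplectic form ω₀ = Σ dxᵢ ∧ dyᵢ on ℂ^n ≅ ℝ^{2n} vanishes identically. -/

import Mathlib

open Finset

lemma hasFDerivAt_normSq' (w : ℂ) : HasFDerivAt Complex.normSq
    ((2*w.re) • Complex.reCLM + (2*w.im) • Complex.imCLM) w := by
  have h3 := ((Complex.reCLM.hasFDerivAt (x := w)).mul (Complex.reCLM.hasFDerivAt (x := w))).add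
    ((Complex.imCLM.hasFDerivAt (x := w)).mul (Complex.imCLM.hasFDerivAt (x := w)))
  convert h3 using 1 <;> try rfl
  ext v; simp; ring

lemma fderiv_gfun (n : ℕ) (a : Fin (n+1)) (z : Fin (n+1) → ℂ) (k : Fin (n+1)) (v : ℂ) :
    fderiv ℝ (fun z : Fin (n+1) → ℂ => Complex.normSq (z 0) - Complex.normSq (z a)) z
        (Pi.single k v)
      = (if k = 0 then 2*((z 0).re * v.re + (z 0).im * v.im) else 0)
        - (if k = a then 2*((z a).re * v.re + (z a).im * v.im) else 0) := by
  have h : HasFDerivAt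
      (fun z : Fin (n+1) → ℂ => Complex.normSq (z 0) - Complex.normSq (z a)) _ z :=
    ((hasFDerivAt_normSq' (z 0)).comp z (hasFDerivAt_apply (𝕜 := ℝ) 0 z)).sub
      ((hasFDerivAt_normSq' (z a)).comp z (hasFDerivAt_apply (𝕜 := ℝ) a z))
  rw [h.fderiv]
  simp only [ContinuousLinearMap.sub_apply]
  congr 1
  · rcases eq_or_ne k (0 : Fin (n+1)) with h' | h'
    · subst h'; simp; ring
    · simp [Pi.single_apply, h', Ne.symm h']
  · rcases eq_or_ne k a with h' | h'
    · subst h'; simp; ring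
    · simp [Pi.single_apply, h', Ne.symm h']

lemma fderiv_improd (N : ℕ) (k : Fin N) (z : Fin N → ℂ) (v : ℂ) :
    fderiv ℝ (fun z : Fin N → ℂ => (∏ i, z i).im) z (Pi.single k v)
      = (v * ∏ j ∈ univ.erase k, z j).im := by
  have hp : HasFDerivAt (𝕜 := ℝ) (fun z : Fin N → ℂ => ∏ i, z i)
      (∑ i : Fin N, (∏ j ∈ univ.erase i, z j) • ContinuousLinearMap.proj i) z :=
    hasFDerivAt_finset_prod
  have h : HasFDerivAt (fun z : Fin N → ℂ => (∏ i, z i).im) _ z :=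
    (Complex.imCLM.hasFDerivAt (x := ∏ i, z i)).comp z hp
  rw [h.fderiv]
  simp only [ContinuousLinearMap.coe_comp', Function.comp_apply,
    ContinuousLinearMap.sum_apply, ContinuousLinearMap.smul_apply,
    ContinuousLinearMap.proj_apply]
  rw [Finset.sum_eq_single k]
  · simp [Pi.single_apply, mul_comm]
  · intro b _ hb; simp [Pi.single_apply, hb.symm]
  · simp

/-- The Poisson bracket of two smooth real functions on ℂⁿ with respect to the
standard symplectic form `ω₀ = ∑ dxₖ ∧ dyₖ` (where `zₖ = xₖ + i yₖ`), expressed in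
coordinates: `{f,g} = ∑ₖ (∂f/∂xₖ · ∂g/∂yₖ − ∂f/∂yₖ · ∂g/∂xₖ)`. -/
noncomputable def poissonBracket (n : ℕ) (f g : (Fin n → ℂ) → ℝ) (z : Fin n → ℂ) : ℝ :=
  ∑ k : Fin n,
    (fderiv ℝ f z (Pi.single k 1) * fderiv ℝ g z (Pi.single k Complex.I)
      - fderiv ℝ f z (Pi.single k Complex.I) * fderiv ℝ g z (Pi.single k 1))

lemma pb_key (n : ℕ) (b : Fin (n+1)) (hb : b ≠ 0) (z : Fin (n+1) → ℂ) :
    poissonBracket (n+1) (fun z => (∏ i, z i).im)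
      (fun z => Complex.normSq (z 0) - Complex.normSq (z b)) z = 0 := by
  unfold poissonBracket
  rw [← Finset.sum_subset (Finset.subset_univ ({0, b} : Finset (Fin (n+1))))]
  · rw [Finset.sum_pair (Ne.symm hb)]
    simp only [fderiv_improd, fderiv_gfun, if_pos rfl, if_neg hb, if_neg (Ne.symm hb)]
    have h := Finset.mul_prod_erase univ z (Finset.mem_univ (0 : Fin (n+1)))
    have h2 := Finset.mul_prod_erase univ z (Finset.mem_univ b)
    have h3 : z 0 * ∏ j ∈ univ.erase 0, z j = z b * ∏ j ∈ univ.erase b, z j := by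
      rw [h, h2]
    have h4 := congrArg Complex.re h3
    rw [Complex.mul_re, Complex.mul_re] at h4
    simp [Complex.mul_im]
    linarith
  · intro k _ hk
    simp only [Finset.mem_insert, Finset.mem_singleton, not_or] at hk
    simp [fderiv_gfun, hk.1, hk.2]

theorem statement0 (n : ℕ) (F : Fin (n + 1) → (Fin (n + 1) → ℂ) → ℝ)
    (hF0 : ∀ z, F 0 z = (∏ i, z i).im)
    (hFk : ∀ k : Fin (n + 1), k ≠ 0 → ∀ z,
      F k z = Complex.normSq (z 0) - Complex.normSq (z k))
    (i j : Fin (n + 1)) (z : Fin (n + 1) → ℂ) :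
    poissonBracket (n + 1) (F i) (F j) z = 0 := by
  have hf0 : F 0 = fun z => (∏ i, z i).im := funext hF0
  have hg : ∀ a : Fin (n+1), a ≠ 0 →
      F a = fun z => Complex.normSq (z 0) - Complex.normSq (z a) :=
    fun a ha => funext (hFk a ha)
  have anti : ∀ f g : (Fin (n+1) → ℂ) → ℝ,
      poissonBracket (n+1) f g z + poissonBracket (n+1) g f z = 0 := by
    intro f g
    unfold poissonBracket
    rw [← Finset.sum_add_distrib]
    exact Finset.sum_eq_zero fun k _ => by ring
  rcases eq_or_ne i 0 with hi | hi <;> rcases eq_or_ne j 0 with hj | hj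
  · subst hi; subst hj
    unfold poissonBracket
    exact Finset.sum_eq_zero fun k _ => by ring
  · subst hi
    rw [hf0, hg j hj]
    exact pb_key n j hj z
  · subst hj
    have h1 := anti (F i) (F 0)
    have h2 : poissonBracket (n+1) (F 0) (F i) z = 0 := by
      rw [hf0, hg i hi]; exact pb_key n i hi z
    linarith
  · rw [hg i hi, hg j hj]
    unfold poissonBracket
    refine Finset.sum_eq_zero fun k _ => ?_
    simp only [fderiv_gfun]
    split_ifs <;> subst_vars <;> ring
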